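/- Let n ≥ 1 and 1 ≤ j ≤ n−1. Then K₀(pⁿ) y(p^j) K₀(pⁿ) = ⋃_{s∈ℤₚˣ} d(s) y(p^j) K₀(pⁿ) = ⋃_{s∈ℤₚˣ} K₀(pⁿ) y(p^j) d(s); moreover for s, s' ∈ ℤₚˣ one has d(s) y(p^j) K₀(pⁿ) = d(s') y(p^j) K₀(pⁿ) if and only if s' s⁻¹ ∈ 1 + p^{n−j}ℤₚ, and likewise K₀(pⁿ) y(p^j) d(s) = K₀(pⁿ) y(p^j) d(s') if and only if s' s⁻¹ ∈ 1 + p^{n−j}ℤₚ. In particular the double coset K₀(pⁿ) y(p^j) K₀(pⁿ) is the disjoint union of exactly p^{n−j−1}(p−1) left (resp. right) K₀(pⁿ)-cosets. -/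

import Mathlib

/-- `K = GL₂(ℤₚ)`, realized as the set of 2×2 matrices over `ℤ_[p]` with unit determinant. -/
def Kfull (p : ℕ) [Fact p.Prime] : Set (Matrix (Fin 2) (Fin 2) ℤ_[p]) :=
  {g | IsUnit g.det}

/-- `K₀(pⁿ) = {(a,b;c,d) ∈ K : c ∈ pⁿℤₚ}`. -/
def K0 (p : ℕ) [Fact p.Prime] (n : ℕ) : Set (Matrix (Fin 2) (Fin 2) ℤ_[p]) :=
  {g | IsUnit g.det ∧ (p : ℤ_[p]) ^ n ∣ g 1 0}

/-- `y(t) = (1,0;t,1)`. -/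
noncomputable def yMat (p : ℕ) [Fact p.Prime] (t : ℤ_[p]) : Matrix (Fin 2) (Fin 2) ℤ_[p] :=
  !![1, 0; t, 1]

/-- `d(s) = (s,0;0,1)` for `s ∈ ℤₚˣ`. -/
noncomputable def dMat (p : ℕ) [Fact p.Prime] (s : ℤ_[p]ˣ) : Matrix (Fin 2) (Fin 2) ℤ_[p] :=
  !![(s : ℤ_[p]), 0; 0, 1]

/-- The double coset `K₀(pⁿ) y(p^j) K₀(pⁿ)` as a set of matrices. -/
def doubleCoset (p : ℕ) [Fact p.Prime] (n j : ℕ) : Set (Matrix (Fin 2) (Fin 2) ℤ_[p]) :=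
  {x | ∃ k₁ ∈ K0 p n, ∃ k₂ ∈ K0 p n, x = k₁ * yMat p ((p : ℤ_[p]) ^ j) * k₂}

namespace Stmt4Aux
variable {p : ℕ} [Fact p.Prime]

lemma isUnit_iff_not_dvd (x : ℤ_[p]) : IsUnit x ↔ ¬ (p:ℤ_[p]) ∣ x := by
  rw [PadicInt.isUnit_iff, ← PadicInt.norm_lt_one_iff_dvd, not_lt]
  constructor
  · intro h; rw [h]
  · intro h; exact le_antisymm (PadicInt.norm_le_one x) h

lemma K0_one (n : ℕ) : (1 : Matrix (Fin 2) (Fin 2) ℤ_[p]) ∈ K0 p n := by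
  refine ⟨by simp, ?_⟩
  simp [Matrix.one_apply]

lemma K0_mul {n : ℕ} {a b : Matrix (Fin 2) (Fin 2) ℤ_[p]} (ha : a ∈ K0 p n) (hb : b ∈ K0 p n) :
    a * b ∈ K0 p n := by
  refine ⟨by rw [Matrix.det_mul]; exact ha.1.mul hb.1, ?_⟩
  have h : (a * b) 1 0 = a 1 0 * b 0 0 + a 1 1 * b 1 0 := by
    simp [Matrix.mul_apply, Fin.sum_univ_two]
  rw [h]
  exact dvd_add (ha.2.mul_right _) (hb.2.mul_left _)

lemma dMat_mem (n : ℕ) (s : ℤ_[p]ˣ) : dMat p s ∈ K0 p n := by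
  refine ⟨?_, ?_⟩
  · simp [dMat, Matrix.det_fin_two_of]
  · simp [dMat]

lemma K0_inv {n : ℕ} {k : Matrix (Fin 2) (Fin 2) ℤ_[p]} (hk : k ∈ K0 p n) :
    ∃ k' ∈ K0 p n, k * k' = 1 ∧ k' * k = 1 := by
  refine ⟨k⁻¹, ⟨?_, ?_⟩, Matrix.mul_nonsing_inv k hk.1, Matrix.nonsing_inv_mul k hk.1⟩
  · have h := Matrix.nonsing_inv_mul k hk.1
    have := congrArg Matrix.det h
    rw [Matrix.det_mul, Matrix.det_one] at this
    exact IsUnit.of_mul_eq_one _ this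
  · rw [Matrix.inv_def, Matrix.smul_apply, Matrix.adjugate_fin_two]
    simp only [Matrix.cons_val', Matrix.cons_val_zero, Matrix.cons_val_one, Matrix.head_cons,
      Matrix.empty_val', Matrix.cons_val_fin_one, Matrix.head_fin_const, smul_eq_mul]
    exact (dvd_neg.mpr hk.2).mul_left _

lemma yMat_mul (t u : ℤ_[p]) : yMat p t * yMat p u = yMat p (t + u) := by
  ext i j
  fin_cases i <;> fin_cases j <;>
    simp [yMat, Matrix.mul_apply, Fin.sum_univ_two]

lemma yMat_zero : yMat p 0 = 1 := by
  ext i j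
  fin_cases i <;> fin_cases j <;> simp [yMat, Matrix.one_apply]

lemma dMat_mul (s u : ℤ_[p]ˣ) : dMat p s * dMat p u = dMat p (s * u) := by
  ext i j
  fin_cases i <;> fin_cases j <;>
    simp [dMat, Matrix.mul_apply, Fin.sum_univ_two, Units.val_mul]

lemma dMat_one : dMat p 1 = 1 := by
  ext i j
  fin_cases i <;> fin_cases j <;> simp [dMat, Matrix.one_apply]

lemma yMat_neg_mul (t : ℤ_[p]) : yMat p (-t) * yMat p t = 1 := by
  rw [yMat_mul, neg_add_cancel, yMat_zero]

lemma yMat_mul_neg (t : ℤ_[p]) : yMat p t * yMat p (-t) = 1 := by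
  rw [yMat_mul, add_neg_cancel, yMat_zero]

lemma dMat_inv_mul (s : ℤ_[p]ˣ) : dMat p s⁻¹ * dMat p s = 1 := by
  rw [dMat_mul, inv_mul_cancel, dMat_one]

lemma dMat_mul_inv (s : ℤ_[p]ˣ) : dMat p s * dMat p s⁻¹ = 1 := by
  rw [dMat_mul, mul_inv_cancel, dMat_one]

lemma det_yMat (t : ℤ_[p]) : (yMat p t).det = 1 := by
  simp [yMat, Matrix.det_fin_two_of]

lemma det_dMat (s : ℤ_[p]ˣ) : (dMat p s).det = (s : ℤ_[p]) := by
  simp [dMat, Matrix.det_fin_two_of]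


lemma dMat_mul_yMat (s : ℤ_[p]ˣ) (t : ℤ_[p]) :
    dMat p s * yMat p t = !![(s : ℤ_[p]), 0; t, 1] := by
  ext i j
  fin_cases i <;> fin_cases j <;>
    simp [dMat, yMat, Matrix.mul_apply, Fin.sum_univ_two]

lemma matE {A : Type*} [CommRing A] (t a b c d S σ : A) (h1 : S * σ = 1)
    (h2 : σ * (a + t * b) = d) :
    !![S, 0; t, 1] * !![d, σ * b; c, d - t * (σ * b)] = !![a, b; c, d] * !![1, 0; t, 1] := by
  ext i j
  fin_cases i <;> fin_cases j <;> simp [Matrix.mul_apply, Fin.sum_univ_two] <;>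
    first
      | ring1
      | linear_combination S * h2 - (a + t * b) * h1
      | linear_combination (-S) * h2 + (a + t * b) * h1
      | linear_combination b * h1
      | linear_combination (-b) * h1

lemma matE' {A : Type*} [CommRing A] (t a b c d S σ : A) (h1 : S * σ = 1)
    (h2 : σ * a = t * b + d) :
    !![d, b; σ * c, t * b + d] * !![1, 0; t, 1] * !![S, 0; 0, 1] =
      !![1, 0; t, 1] * !![a, b; c, d] := by
  ext i j
  fin_cases i <;> fin_cases j <;> simp [Matrix.mul_apply, Fin.sum_univ_two] <;>
    first
      | ring1
      | linear_combination (-S) * h2 + a * h1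
      | linear_combination S * h2 - a * h1
      | linear_combination (c + t * a) * h1 - t * S * h2
      | linear_combination (c + t * a) * h1 + t * S * h2
      | linear_combination (-(c + t * a)) * h1 + t * S * h2
      | linear_combination (t * S) * h2 - (c + t * a) * h1

lemma lemA {n j : ℕ} (hn : 1 ≤ n) (hj : 1 ≤ j) {k : Matrix (Fin 2) (Fin 2) ℤ_[p]}
    (hk : k ∈ K0 p n) :
    ∃ s : ℤ_[p]ˣ, ∃ k' ∈ K0 p n,
      k * yMat p ((p:ℤ_[p])^j) = dMat p s * yMat p ((p:ℤ_[p])^j) * k' := by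
  obtain ⟨hdet, hc⟩ := hk
  have hpc : (p:ℤ_[p]) ∣ k 1 0 := (dvd_pow_self (p:ℤ_[p]) (by omega : n ≠ 0)).trans hc
  have hpt : (p:ℤ_[p]) ∣ (p:ℤ_[p])^j := dvd_pow_self _ (by omega : j ≠ 0)
  have had : IsUnit (k 0 0 * k 1 1) := by
    rw [isUnit_iff_not_dvd]
    intro h
    have hdd : (p:ℤ_[p]) ∣ k.det := by
      rw [Matrix.det_fin_two k]; exact dvd_sub h (hpc.mul_left (k 0 1))
    exact (isUnit_iff_not_dvd _).mp hdet hdd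
  have ha : IsUnit (k 0 0) := isUnit_of_mul_isUnit_left had
  have hd : IsUnit (k 1 1) := isUnit_of_mul_isUnit_right had
  have hu : IsUnit (k 0 0 + (p:ℤ_[p])^j * k 0 1) := by
    rw [isUnit_iff_not_dvd]
    intro h
    have h3 : (p:ℤ_[p]) ∣ k 0 0 := by
      have h2 := dvd_sub h (hpt.mul_right (k 0 1))
      simpa using h2
    exact (isUnit_iff_not_dvd _).mp ha h3
  refine ⟨hu.unit * hd.unit⁻¹, ?_⟩
  set s : ℤ_[p]ˣ := hu.unit * hd.unit⁻¹ with hs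
  have F1 : (s : ℤ_[p]) * ((s⁻¹ : ℤ_[p]ˣ) : ℤ_[p]) = 1 := Units.mul_inv s
  have F2 : ((s⁻¹ : ℤ_[p]ˣ) : ℤ_[p]) * (k 0 0 + (p:ℤ_[p])^j * k 0 1) = k 1 1 := by
    have hsinv : s⁻¹ = hd.unit * hu.unit⁻¹ := by rw [hs, mul_inv_rev, inv_inv]
    rw [← hu.unit_spec, hsinv, Units.val_mul, mul_assoc, Units.inv_mul, mul_one, hd.unit_spec]
  set k' : Matrix (Fin 2) (Fin 2) ℤ_[p] :=
    !![k 1 1, ((s⁻¹ : ℤ_[p]ˣ) : ℤ_[p]) * k 0 1; k 1 0,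
       k 1 1 - (p:ℤ_[p])^j * (((s⁻¹ : ℤ_[p]ˣ) : ℤ_[p]) * k 0 1)] with hk'
  have E : dMat p s * yMat p ((p:ℤ_[p])^j) * k' = k * yMat p ((p:ℤ_[p])^j) := by
    calc dMat p s * yMat p ((p:ℤ_[p])^j) * k'
        = !![(s : ℤ_[p]), 0; (p:ℤ_[p])^j, 1] * k' := by rw [dMat_mul_yMat]
      _ = !![k 0 0, k 0 1; k 1 0, k 1 1] * !![1, 0; (p:ℤ_[p])^j, 1] :=
          matE _ _ _ _ _ _ _ F1 F2
      _ = k * yMat p ((p:ℤ_[p])^j) := by rw [← Matrix.eta_fin_two k]; rfl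
  have h1 : (s : ℤ_[p]) * k'.det = k.det := by
    have h0 := congrArg Matrix.det E
    rwa [Matrix.det_mul, Matrix.det_mul, Matrix.det_mul, det_dMat, det_yMat, mul_one,
      mul_one] at h0
  refine ⟨k', ⟨isUnit_of_mul_isUnit_right (h1.symm ▸ hdet), ?_⟩, E.symm⟩
  rw [hk']
  simpa using hc

lemma lemB {n j : ℕ} (hn : 1 ≤ n) (hj : 1 ≤ j) {k : Matrix (Fin 2) (Fin 2) ℤ_[p]}
    (hk : k ∈ K0 p n) :
    ∃ s : ℤ_[p]ˣ, ∃ k' ∈ K0 p n,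
      yMat p ((p:ℤ_[p])^j) * k = k' * yMat p ((p:ℤ_[p])^j) * dMat p s := by
  obtain ⟨hdet, hc⟩ := hk
  have hpc : (p:ℤ_[p]) ∣ k 1 0 := (dvd_pow_self (p:ℤ_[p]) (by omega : n ≠ 0)).trans hc
  have hpt : (p:ℤ_[p]) ∣ (p:ℤ_[p])^j := dvd_pow_self _ (by omega : j ≠ 0)
  have had : IsUnit (k 0 0 * k 1 1) := by
    rw [isUnit_iff_not_dvd]
    intro h
    have hdd : (p:ℤ_[p]) ∣ k.det := by
      rw [Matrix.det_fin_two k]; exact dvd_sub h (hpc.mul_left (k 0 1))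
    exact (isUnit_iff_not_dvd _).mp hdet hdd
  have ha : IsUnit (k 0 0) := isUnit_of_mul_isUnit_left had
  have hd : IsUnit (k 1 1) := isUnit_of_mul_isUnit_right had
  have hu : IsUnit ((p:ℤ_[p])^j * k 0 1 + k 1 1) := by
    rw [isUnit_iff_not_dvd]
    intro h
    have h3 : (p:ℤ_[p]) ∣ k 1 1 := by
      have h2 := dvd_sub h (hpt.mul_right (k 0 1))
      simpa using h2
    exact (isUnit_iff_not_dvd _).mp hd h3
  refine ⟨ha.unit * hu.unit⁻¹, ?_⟩
  set s : ℤ_[p]ˣ := ha.unit * hu.unit⁻¹ with hs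
  have F1 : (s : ℤ_[p]) * ((s⁻¹ : ℤ_[p]ˣ) : ℤ_[p]) = 1 := Units.mul_inv s
  have F2 : ((s⁻¹ : ℤ_[p]ˣ) : ℤ_[p]) * k 0 0 = (p:ℤ_[p])^j * k 0 1 + k 1 1 := by
    have hsinv : s⁻¹ = hu.unit * ha.unit⁻¹ := by rw [hs, mul_inv_rev, inv_inv]
    rw [← ha.unit_spec, hsinv, Units.val_mul, mul_assoc, Units.inv_mul, mul_one, hu.unit_spec]
  set k' : Matrix (Fin 2) (Fin 2) ℤ_[p] :=
    !![k 1 1, k 0 1; ((s⁻¹ : ℤ_[p]ˣ) : ℤ_[p]) * k 1 0,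
       (p:ℤ_[p])^j * k 0 1 + k 1 1] with hk'
  have E : k' * yMat p ((p:ℤ_[p])^j) * dMat p s = yMat p ((p:ℤ_[p])^j) * k := by
    calc k' * yMat p ((p:ℤ_[p])^j) * dMat p s
        = !![k 1 1, k 0 1; ((s⁻¹ : ℤ_[p]ˣ) : ℤ_[p]) * k 1 0, (p:ℤ_[p])^j * k 0 1 + k 1 1] *
            !![1, 0; (p:ℤ_[p])^j, 1] * !![(s : ℤ_[p]), 0; 0, 1] := rfl
      _ = !![1, 0; (p:ℤ_[p])^j, 1] * !![k 0 0, k 0 1; k 1 0, k 1 1] :=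
          matE' _ _ _ _ _ _ _ F1 F2
      _ = yMat p ((p:ℤ_[p])^j) * k := by rw [← Matrix.eta_fin_two k]; rfl
  have h1 : k'.det * (s : ℤ_[p]) = k.det := by
    have h0 := congrArg Matrix.det E
    rwa [Matrix.det_mul, Matrix.det_mul, Matrix.det_mul, det_dMat, det_yMat, mul_one,
      one_mul] at h0
  refine ⟨k', ⟨isUnit_of_mul_isUnit_left (h1.symm ▸ hdet), ?_⟩, E.symm⟩
  rw [hk']
  simpa using hc


lemma conj1 (t : ℤ_[p]) (v : ℤ_[p]ˣ) :
    yMat p (-t) * (dMat p v * yMat p t) = !![(v : ℤ_[p]), 0; t * (1 - (v : ℤ_[p])), 1] := by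
  ext i j
  fin_cases i <;> fin_cases j <;>
    simp [yMat, dMat, Matrix.mul_apply, Fin.sum_univ_two] <;> ring1

lemma conj2 (t : ℤ_[p]) (v : ℤ_[p]ˣ) :
    yMat p t * (dMat p v * yMat p (-t)) = !![(v : ℤ_[p]), 0; t * ((v : ℤ_[p]) - 1), 1] := by
  ext i j
  fin_cases i <;> fin_cases j <;>
    simp [yMat, dMat, Matrix.mul_apply, Fin.sum_univ_two] <;> ring1

lemma dvd_cancel_pow {n j : ℕ} (hjn : j ≤ n) (x : ℤ_[p]) :
    (p:ℤ_[p])^n ∣ (p:ℤ_[p])^j * x ↔ (p:ℤ_[p])^(n-j) ∣ x := by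
  have hp : (p:ℤ_[p]) ≠ 0 := Nat.cast_ne_zero.mpr (Fact.out : p.Prime).ne_zero
  conv_lhs => rw [show n = j + (n-j) by omega, pow_add]
  exact mul_dvd_mul_iff_left (pow_ne_zero j hp)

lemma dvd_flip {x u v : ℤ_[p]} (huv : u * v = 1) (h : x ∣ u - 1) : x ∣ v - 1 := by
  have e : (u - 1) * (-v) = v - 1 := by linear_combination -huv
  exact e ▸ h.mul_right (-v)

lemma expl_mem {n j : ℕ} (hjn : j ≤ n) (v : ℤ_[p]ˣ) (x : ℤ_[p])
    (h : (p:ℤ_[p])^(n-j) ∣ x) : !![(v:ℤ_[p]), 0; (p:ℤ_[p])^j * x, 1] ∈ K0 p n := by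
  refine ⟨by simp [Matrix.det_fin_two_of], ?_⟩
  have h2 : (p:ℤ_[p])^n ∣ (p:ℤ_[p])^j * x := by
    rw [show n = j + (n-j) by omega, pow_add]
    exact mul_dvd_mul_left _ h
  simpa using h2

lemma coset_subset {n j : ℕ} (hjn : j ≤ n) {s s' : ℤ_[p]ˣ}
    (h : (p:ℤ_[p])^(n-j) ∣ 1 - ((s'⁻¹ * s : ℤ_[p]ˣ) : ℤ_[p])) :
    {x | ∃ k ∈ K0 p n, x = dMat p s * yMat p ((p:ℤ_[p])^j) * k} ⊆
      {x | ∃ k ∈ K0 p n, x = dMat p s' * yMat p ((p:ℤ_[p])^j) * k} := by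
  rintro x ⟨k, hkK, rfl⟩
  set t : ℤ_[p] := (p:ℤ_[p])^j with ht
  have hexp : yMat p (-t) * (dMat p s'⁻¹ * (dMat p s * yMat p t)) =
      !![((s'⁻¹ * s : ℤ_[p]ˣ) : ℤ_[p]), 0; t * (1 - ((s'⁻¹ * s : ℤ_[p]ˣ) : ℤ_[p])), 1] := by
    rw [← mul_assoc (dMat p s'⁻¹), dMat_mul]
    exact conj1 t (s'⁻¹ * s)
  have hMK : yMat p (-t) * (dMat p s'⁻¹ * (dMat p s * yMat p t)) ∈ K0 p n := by
    rw [hexp]; exact expl_mem hjn _ _ h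
  have hM : dMat p s' * yMat p t * (yMat p (-t) * (dMat p s'⁻¹ * (dMat p s * yMat p t))) =
      dMat p s * yMat p t := by
    simp only [← mul_assoc]
    rw [mul_assoc (dMat p s'), yMat_mul_neg, mul_one, dMat_mul_inv, one_mul]
  refine ⟨_ * k, K0_mul hMK hkK, ?_⟩
  rw [← mul_assoc, hM]

lemma coset_subset' {n j : ℕ} (hjn : j ≤ n) {s s' : ℤ_[p]ˣ}
    (h : (p:ℤ_[p])^(n-j) ∣ ((s * s'⁻¹ : ℤ_[p]ˣ) : ℤ_[p]) - 1) :
    {x | ∃ k ∈ K0 p n, x = k * yMat p ((p:ℤ_[p])^j) * dMat p s} ⊆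
      {x | ∃ k ∈ K0 p n, x = k * yMat p ((p:ℤ_[p])^j) * dMat p s'} := by
  rintro x ⟨k, hkK, rfl⟩
  set t : ℤ_[p] := (p:ℤ_[p])^j with ht
  have hexp : yMat p t * (dMat p (s * s'⁻¹) * yMat p (-t)) =
      !![((s * s'⁻¹ : ℤ_[p]ˣ) : ℤ_[p]), 0; t * (((s * s'⁻¹ : ℤ_[p]ˣ) : ℤ_[p]) - 1), 1] :=
    conj2 t (s * s'⁻¹)
  have hMK : yMat p t * (dMat p (s * s'⁻¹) * yMat p (-t)) ∈ K0 p n := by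
    rw [hexp]; exact expl_mem hjn _ _ h
  have hM : yMat p t * (dMat p (s * s'⁻¹) * yMat p (-t)) * (yMat p t * dMat p s') =
      yMat p t * dMat p s := by
    simp only [← mul_assoc]
    rw [mul_assoc (yMat p t * dMat p (s * s'⁻¹)), yMat_neg_mul, mul_one, mul_assoc, dMat_mul,
      inv_mul_cancel_right]
  refine ⟨k * (yMat p t * (dMat p (s * s'⁻¹) * yMat p (-t))), K0_mul hkK hMK, ?_⟩
  rw [mul_assoc (k * (yMat p t * (dMat p (s * s'⁻¹) * yMat p (-t)))),
    mul_assoc k (yMat p t * (dMat p (s * s'⁻¹) * yMat p (-t))), hM, ← mul_assoc]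

lemma part3 {n j : ℕ} (hn : 1 ≤ n) (hj : 1 ≤ j) (hjn : j ≤ n - 1) (s s' : ℤ_[p]ˣ) :
    ({x | ∃ k ∈ K0 p n, x = dMat p s * yMat p ((p : ℤ_[p]) ^ j) * k} =
      {x | ∃ k ∈ K0 p n, x = dMat p s' * yMat p ((p : ℤ_[p]) ^ j) * k}) ↔
    (p : ℤ_[p]) ^ (n - j) ∣ (((s' * s⁻¹ : ℤ_[p]ˣ) : ℤ_[p]) - 1) := by
  set t : ℤ_[p] := (p:ℤ_[p])^j with ht
  constructor
  · intro h
    have hmem : dMat p s * yMat p t ∈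
        {x | ∃ k ∈ K0 p n, x = dMat p s * yMat p t * k} := ⟨1, K0_one n, (mul_one _).symm⟩
    rw [h] at hmem
    obtain ⟨k, hkK, hEq⟩ := hmem
    have hk2 : yMat p (-t) * (dMat p s'⁻¹ * (dMat p s * yMat p t)) = k := by
      rw [hEq, ← mul_assoc, ← mul_assoc, ← mul_assoc, mul_assoc (yMat p (-t)), dMat_inv_mul,
        mul_one, yMat_neg_mul, one_mul]
    have hexp : yMat p (-t) * (dMat p s'⁻¹ * (dMat p s * yMat p t)) =
        !![((s'⁻¹ * s : ℤ_[p]ˣ) : ℤ_[p]), 0; t * (1 - ((s'⁻¹ * s : ℤ_[p]ˣ) : ℤ_[p])), 1] := by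
      rw [← mul_assoc (dMat p s'⁻¹), dMat_mul]
      exact conj1 t (s'⁻¹ * s)
    have hent : (p:ℤ_[p])^n ∣ t * (1 - ((s'⁻¹ * s : ℤ_[p]ˣ) : ℤ_[p])) := by
      have h2 := hkK.2
      rw [← hk2, hexp] at h2
      simpa using h2
    rw [ht, dvd_cancel_pow (by omega)] at hent
    have h2 : (p:ℤ_[p])^(n-j) ∣ ((s'⁻¹ * s : ℤ_[p]ˣ) : ℤ_[p]) - 1 := dvd_sub_comm.mp hent
    refine dvd_flip ?_ h2
    rw [← Units.val_mul, show (s'⁻¹ * s) * (s' * s⁻¹) = 1 by rw [mul_mul_mul_comm, inv_mul_cancel, mul_inv_cancel, one_mul], Units.val_one]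
  · intro h
    apply Set.Subset.antisymm
    · refine coset_subset (by omega) ?_
      refine dvd_sub_comm.mp (dvd_flip ?_ h)
      rw [← Units.val_mul, show (s' * s⁻¹) * (s'⁻¹ * s) = 1 by rw [mul_mul_mul_comm, mul_inv_cancel, inv_mul_cancel, one_mul], Units.val_one]
    · refine coset_subset (by omega) ?_
      refine dvd_sub_comm.mp ?_
      rw [show s⁻¹ * s' = s' * s⁻¹ from mul_comm _ _]
      exact h

lemma part4 {n j : ℕ} (hn : 1 ≤ n) (hj : 1 ≤ j) (hjn : j ≤ n - 1) (s s' : ℤ_[p]ˣ) :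
    ({x | ∃ k ∈ K0 p n, x = k * yMat p ((p : ℤ_[p]) ^ j) * dMat p s} =
      {x | ∃ k ∈ K0 p n, x = k * yMat p ((p : ℤ_[p]) ^ j) * dMat p s'}) ↔
    (p : ℤ_[p]) ^ (n - j) ∣ (((s' * s⁻¹ : ℤ_[p]ˣ) : ℤ_[p]) - 1) := by
  set t : ℤ_[p] := (p:ℤ_[p])^j with ht
  constructor
  · intro h
    have hmem : yMat p t * dMat p s ∈
        {x | ∃ k ∈ K0 p n, x = k * yMat p t * dMat p s} := ⟨1, K0_one n, by rw [one_mul]⟩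
    rw [h] at hmem
    obtain ⟨k, hkK, hEq⟩ := hmem
    have hk2 : yMat p t * (dMat p (s * s'⁻¹) * yMat p (-t)) = k := by
      have hsplit : yMat p t * (dMat p (s * s'⁻¹) * yMat p (-t)) =
          yMat p t * dMat p s * (dMat p s'⁻¹ * yMat p (-t)) := by
        rw [← dMat_mul]
        simp only [← mul_assoc]
      rw [hsplit, hEq, ← mul_assoc, mul_assoc (k * yMat p t), dMat_mul_inv, mul_one,
        mul_assoc k, yMat_mul_neg, mul_one]
    have hexp : yMat p t * (dMat p (s * s'⁻¹) * yMat p (-t)) =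
        !![((s * s'⁻¹ : ℤ_[p]ˣ) : ℤ_[p]), 0; t * (((s * s'⁻¹ : ℤ_[p]ˣ) : ℤ_[p]) - 1), 1] :=
      conj2 t (s * s'⁻¹)
    have hent : (p:ℤ_[p])^n ∣ t * (((s * s'⁻¹ : ℤ_[p]ˣ) : ℤ_[p]) - 1) := by
      have h2 := hkK.2
      rw [← hk2, hexp] at h2
      simpa using h2
    rw [ht, dvd_cancel_pow (by omega)] at hent
    refine dvd_flip ?_ hent
    rw [← Units.val_mul, show (s * s'⁻¹) * (s' * s⁻¹) = 1 by rw [mul_mul_mul_comm, ← mul_inv_rev, mul_inv_cancel], Units.val_one]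
  · intro h
    apply Set.Subset.antisymm
    · refine coset_subset' (by omega) ?_
      refine dvd_flip ?_ h
      rw [← Units.val_mul, show (s' * s⁻¹) * (s * s'⁻¹) = 1 by rw [mul_mul_mul_comm, ← mul_inv_rev, mul_inv_cancel], Units.val_one]
    · exact coset_subset' (by omega) h

lemma part1 {n j : ℕ} (hn : 1 ≤ n) (hj : 1 ≤ j) :
    doubleCoset p n j =
      {x | ∃ s : ℤ_[p]ˣ, ∃ k ∈ K0 p n, x = dMat p s * yMat p ((p : ℤ_[p]) ^ j) * k} := by
  ext x
  constructor
  · rintro ⟨k₁, hk₁, k₂, hk₂, rfl⟩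
    obtain ⟨s, k', hk', hE⟩ := lemA hn hj hk₁
    exact ⟨s, k' * k₂, K0_mul hk' hk₂, by rw [hE, mul_assoc]⟩
  · rintro ⟨s, k, hk, rfl⟩
    exact ⟨dMat p s, dMat_mem n s, k, hk, rfl⟩

lemma part2 {n j : ℕ} (hn : 1 ≤ n) (hj : 1 ≤ j) :
    doubleCoset p n j =
      {x | ∃ s : ℤ_[p]ˣ, ∃ k ∈ K0 p n, x = k * yMat p ((p : ℤ_[p]) ^ j) * dMat p s} := by
  ext x
  constructor
  · rintro ⟨k₁, hk₁, k₂, hk₂, rfl⟩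
    obtain ⟨s, k', hk', hE⟩ := lemB hn hj hk₂
    refine ⟨s, k₁ * k', K0_mul hk₁ hk', ?_⟩
    rw [mul_assoc k₁, hE]
    simp only [mul_assoc]
  · rintro ⟨s, k, hk, rfl⟩
    exact ⟨k, hk, dMat p s, dMat_mem n s, rfl⟩


lemma coset_mul {n : ℕ} {k₀ : Matrix (Fin 2) (Fin 2) ℤ_[p]} (hk₀ : k₀ ∈ K0 p n)
    (A : Matrix (Fin 2) (Fin 2) ℤ_[p]) :
    {z | ∃ k ∈ K0 p n, z = A * k₀ * k} = {z | ∃ k ∈ K0 p n, z = A * k} := by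
  ext z
  constructor
  · rintro ⟨k, hk, rfl⟩
    exact ⟨k₀ * k, K0_mul hk₀ hk, by rw [mul_assoc]⟩
  · rintro ⟨k, hk, rfl⟩
    obtain ⟨k₀', hk₀', hki, _⟩ := K0_inv hk₀
    refine ⟨k₀' * k, K0_mul hk₀' hk, ?_⟩
    rw [mul_assoc A k₀, ← mul_assoc k₀, hki, one_mul]

lemma coset_mul_right {n : ℕ} {k₀ : Matrix (Fin 2) (Fin 2) ℤ_[p]} (hk₀ : k₀ ∈ K0 p n)
    (B : Matrix (Fin 2) (Fin 2) ℤ_[p]) :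
    {z | ∃ k ∈ K0 p n, z = k * (k₀ * B)} = {z | ∃ k ∈ K0 p n, z = k * B} := by
  ext z
  constructor
  · rintro ⟨k, hk, rfl⟩
    exact ⟨k * k₀, K0_mul hk hk₀, (mul_assoc _ _ _).symm⟩
  · rintro ⟨k, hk, rfl⟩
    obtain ⟨k₀', hk₀', _, hki⟩ := K0_inv hk₀
    refine ⟨k * k₀', K0_mul hk hk₀', ?_⟩
    rw [mul_assoc k k₀', ← mul_assoc k₀', hki, one_mul]


lemma phi_surj (m : ℕ) (hm : 1 ≤ m) :
    Function.Surjective (Units.map (PadicInt.toZModPow (p := p) m).toMonoidHom) := by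
  haveI : NeZero (p ^ m) := ⟨pow_ne_zero _ (Fact.out : p.Prime).ne_zero⟩
  haveI : Fact (1 < p ^ m) :=
    ⟨Nat.one_lt_pow (by omega) (Fact.out : p.Prime).one_lt⟩
  intro u
  obtain ⟨x, hx⟩ : ∃ x : ℤ_[p], PadicInt.toZModPow m x = (u : ZMod (p ^ m)) :=
    ⟨(((u : ZMod (p ^ m)).val : ℕ) : ℤ_[p]), by
      rw [map_natCast, ZMod.natCast_val, ZMod.cast_id]⟩
  have hxu : IsUnit x := by
    rw [isUnit_iff_not_dvd]
    rintro ⟨y, rfl⟩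
    have h1 : IsUnit ((p : ZMod (p ^ m)) * PadicInt.toZModPow m y) := by
      rw [← map_natCast (PadicInt.toZModPow (p := p) m), ← map_mul, hx]
      exact u.isUnit
    have h2 : IsUnit (p : ZMod (p ^ m)) := isUnit_of_mul_isUnit_left h1
    have h3 := h2.pow m
    rw [← Nat.cast_pow, ZMod.natCast_self] at h3
    exact zero_ne_one (isUnit_zero_iff.mp h3)
  refine ⟨hxu.unit, Units.ext ?_⟩
  simpa [hxu.unit_spec] using hx

lemma phi_iff (m : ℕ) (s s' : ℤ_[p]ˣ) :
    Units.map (PadicInt.toZModPow (p := p) m).toMonoidHom s =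
      Units.map (PadicInt.toZModPow (p := p) m).toMonoidHom s' ↔
    (p : ℤ_[p]) ^ m ∣ (((s' * s⁻¹ : ℤ_[p]ˣ) : ℤ_[p]) - 1) := by
  rw [Units.ext_iff]
  change PadicInt.toZModPow m (s : ℤ_[p]) = PadicInt.toZModPow m (s' : ℤ_[p]) ↔ _
  rw [← sub_eq_zero, ← map_sub, ← RingHom.mem_ker, PadicInt.ker_toZModPow,
    Ideal.mem_span_singleton]
  constructor
  · intro h
    have h2 := h.mul_right ((s⁻¹ : ℤ_[p]ˣ) : ℤ_[p])
    have e : ((s : ℤ_[p]) - (s' : ℤ_[p])) * ((s⁻¹ : ℤ_[p]ˣ) : ℤ_[p]) =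
        -((((s' * s⁻¹ : ℤ_[p]ˣ) : ℤ_[p])) - 1) := by
      rw [Units.val_mul]
      linear_combination Units.mul_inv s
    rw [e] at h2
    exact (dvd_neg.mp h2)
  · intro h
    have h2 := h.mul_right ((s : ℤ_[p]))
    have e : ((((s' * s⁻¹ : ℤ_[p]ˣ) : ℤ_[p])) - 1) * (s : ℤ_[p]) =
        -((s : ℤ_[p]) - (s' : ℤ_[p])) := by
      rw [Units.val_mul]
      linear_combination (s' : ℤ_[p]) * Units.inv_mul s
    rw [e] at h2
    exact dvd_neg.mp h2

lemma card_range_eq {α β γ : Type*} (g : α → β) (φ : α → γ)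
    (key : ∀ a a', g a = g a' ↔ φ a = φ a') (hsurj : Function.Surjective φ) :
    Nat.card (Set.range g) = Nat.card γ := by
  refine Nat.card_eq_of_bijective (fun C => φ C.2.choose) ⟨?_, ?_⟩
  · rintro ⟨C, hC⟩ ⟨C', hC'⟩ h
    simp only at h
    have h2 := (key _ _).mpr h
    rw [hC.choose_spec, hC'.choose_spec] at h2
    exact Subtype.ext h2
  · intro u
    obtain ⟨a, ha⟩ := hsurj u
    refine ⟨⟨g a, a, rfl⟩, ?_⟩
    have h2 : g (⟨g a, a, rfl⟩ : Set.range g).2.choose = g a :=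
      (⟨g a, a, rfl⟩ : Set.range g).2.choose_spec
    simpa [← ha] using (key _ _).mp h2


lemma count_left {n j : ℕ} (hn : 1 ≤ n) (hj : 1 ≤ j) (hjn : j ≤ n - 1) :
    Nat.card {C : Set (Matrix (Fin 2) (Fin 2) ℤ_[p]) |
        ∃ x ∈ doubleCoset p n j, C = {z | ∃ k ∈ K0 p n, z = x * k}} =
      p ^ (n - j - 1) * (p - 1) := by
  classical
  have hSrange : {C : Set (Matrix (Fin 2) (Fin 2) ℤ_[p]) |
      ∃ x ∈ doubleCoset p n j, C = {z | ∃ k ∈ K0 p n, z = x * k}} =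
      Set.range (fun s : ℤ_[p]ˣ =>
        {x | ∃ k ∈ K0 p n, x = dMat p s * yMat p ((p : ℤ_[p]) ^ j) * k}) := by
    ext C
    simp only [Set.mem_setOf_eq, Set.mem_range]
    constructor
    · rintro ⟨x, hx, rfl⟩
      rw [part1 hn hj] at hx
      obtain ⟨s, k₀, hk₀, rfl⟩ := hx
      exact ⟨s, (coset_mul hk₀ (dMat p s * yMat p ((p : ℤ_[p]) ^ j))).symm⟩
    · rintro ⟨s, rfl⟩
      refine ⟨dMat p s * yMat p ((p : ℤ_[p]) ^ j),
        ⟨dMat p s, dMat_mem n s, 1, K0_one n, by rw [mul_one]⟩, rfl⟩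
  rw [hSrange,
    card_range_eq _ (Units.map (PadicInt.toZModPow (p := p) (n - j)).toMonoidHom)
      (fun s s' => (part3 hn hj hjn s s').trans ((phi_iff (n - j) s s').symm))
      (phi_surj (n - j) (by omega))]
  haveI : NeZero (p ^ (n - j)) := ⟨pow_ne_zero _ (Fact.out : p.Prime).ne_zero⟩
  rw [Nat.card_eq_fintype_card, ZMod.card_units_eq_totient,
    Nat.totient_prime_pow (Fact.out : p.Prime) (by omega : 0 < n - j)]

lemma count_right {n j : ℕ} (hn : 1 ≤ n) (hj : 1 ≤ j) (hjn : j ≤ n - 1) :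
    Nat.card {C : Set (Matrix (Fin 2) (Fin 2) ℤ_[p]) |
        ∃ x ∈ doubleCoset p n j, C = {z | ∃ k ∈ K0 p n, z = k * x}} =
      p ^ (n - j - 1) * (p - 1) := by
  classical
  have hSrange : {C : Set (Matrix (Fin 2) (Fin 2) ℤ_[p]) |
      ∃ x ∈ doubleCoset p n j, C = {z | ∃ k ∈ K0 p n, z = k * x}} =
      Set.range (fun s : ℤ_[p]ˣ =>
        {x | ∃ k ∈ K0 p n, x = k * yMat p ((p : ℤ_[p]) ^ j) * dMat p s}) := by
    ext C
    simp only [Set.mem_setOf_eq, Set.mem_range]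
    constructor
    · rintro ⟨x, hx, rfl⟩
      rw [part2 hn hj] at hx
      obtain ⟨s, k₀, hk₀, rfl⟩ := hx
      refine ⟨s, ?_⟩
      rw [show k₀ * yMat p ((p : ℤ_[p]) ^ j) * dMat p s =
          k₀ * (yMat p ((p : ℤ_[p]) ^ j) * dMat p s) from mul_assoc _ _ _,
        coset_mul_right hk₀]
      ext z
      simp only [Set.mem_setOf_eq, mul_assoc]
    · rintro ⟨s, rfl⟩
      refine ⟨yMat p ((p : ℤ_[p]) ^ j) * dMat p s,
        ⟨1, K0_one n, dMat p s, dMat_mem n s, by rw [one_mul]⟩, ?_⟩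
      ext z
      simp only [Set.mem_setOf_eq, mul_assoc]
  rw [hSrange,
    card_range_eq _ (Units.map (PadicInt.toZModPow (p := p) (n - j)).toMonoidHom)
      (fun s s' => (part4 hn hj hjn s s').trans ((phi_iff (n - j) s s').symm))
      (phi_surj (n - j) (by omega))]
  haveI : NeZero (p ^ (n - j)) := ⟨pow_ne_zero _ (Fact.out : p.Prime).ne_zero⟩
  rw [Nat.card_eq_fintype_card, ZMod.card_units_eq_totient,
    Nat.totient_prime_pow (Fact.out : p.Prime) (by omega : 0 < n - j)]

end Stmt4Aux

/-- For `1 ≤ j ≤ n−1`: `K₀(pⁿ) y(p^j) K₀(pⁿ) = ⋃_s d(s) y(p^j) K₀(pⁿ)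
= ⋃_s K₀(pⁿ) y(p^j) d(s)`; two such left (resp. right) cosets coincide iff
`s's⁻¹ ∈ 1 + p^{n−j}ℤₚ`; and the double coset is a disjoint union of exactly
`p^{n−j−1}(p−1)` left (resp. right) `K₀(pⁿ)`-cosets. -/
theorem stmt4 (p n j : ℕ) [Fact p.Prime] (hn : 1 ≤ n) (hj : 1 ≤ j) (hjn : j ≤ n - 1) :
    (doubleCoset p n j =
      {x | ∃ s : ℤ_[p]ˣ, ∃ k ∈ K0 p n, x = dMat p s * yMat p ((p : ℤ_[p]) ^ j) * k}) ∧
    (doubleCoset p n j =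
      {x | ∃ s : ℤ_[p]ˣ, ∃ k ∈ K0 p n, x = k * yMat p ((p : ℤ_[p]) ^ j) * dMat p s}) ∧
    (∀ s s' : ℤ_[p]ˣ,
      ({x | ∃ k ∈ K0 p n, x = dMat p s * yMat p ((p : ℤ_[p]) ^ j) * k} =
        {x | ∃ k ∈ K0 p n, x = dMat p s' * yMat p ((p : ℤ_[p]) ^ j) * k}) ↔
      (p : ℤ_[p]) ^ (n - j) ∣ (((s' * s⁻¹ : ℤ_[p]ˣ) : ℤ_[p]) - 1)) ∧
    (∀ s s' : ℤ_[p]ˣ,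
      ({x | ∃ k ∈ K0 p n, x = k * yMat p ((p : ℤ_[p]) ^ j) * dMat p s} =
        {x | ∃ k ∈ K0 p n, x = k * yMat p ((p : ℤ_[p]) ^ j) * dMat p s'}) ↔
      (p : ℤ_[p]) ^ (n - j) ∣ (((s' * s⁻¹ : ℤ_[p]ˣ) : ℤ_[p]) - 1)) ∧
    (Nat.card {C : Set (Matrix (Fin 2) (Fin 2) ℤ_[p]) |
        ∃ x ∈ doubleCoset p n j, C = {z | ∃ k ∈ K0 p n, z = x * k}} =
      p ^ (n - j - 1) * (p - 1)) ∧
    (Nat.card {C : Set (Matrix (Fin 2) (Fin 2) ℤ_[p]) |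
        ∃ x ∈ doubleCoset p n j, C = {z | ∃ k ∈ K0 p n, z = k * x}} =
      p ^ (n - j - 1) * (p - 1)) := by
  exact ⟨Stmt4Aux.part1 hn hj, Stmt4Aux.part2 hn hj, Stmt4Aux.part3 hn hj hjn,
    Stmt4Aux.part4 hn hj hjn, Stmt4Aux.count_left hn hj hjn, Stmt4Aux.count_right hn hj hjn⟩
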